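/- Let a_{l,m} = (2l+4m)! / ((l+m)!·l!·(m!)³). Then for every natural number n, Σ_{l+m=n} a_{l,m}·|λ|^l·|μ|^m ≤ ((4n)!/(n!)^4)·(|λ|+|μ|)^n for all complex numbers λ, μ. -/

import Mathlib

open Finset

noncomputable def aCoeff (l m : ℕ) : ℝ :=
  ((2 * l + 4 * m).factorial : ℝ) /
    (((l + m).factorial : ℝ) * (l.factorial : ℝ) * ((m.factorial : ℝ)) ^ 3)

lemma key_aux (n m j : ℕ) :
    (2*n+2*m).factorial * ((m+j).factorial)^2 ≤ (2*n+2*m+2*j).factorial * (m.factorial)^2 := by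
  induction j with
  | zero => simp
  | succ j ih =>
    have h1 : (m+(j+1)).factorial = (m+j+1) * (m+j).factorial := by
      rw [show m+(j+1) = (m+j)+1 by omega, Nat.factorial_succ]
    have h2 : (2*n+2*m+2*(j+1)).factorial
        = (2*n+2*m+2*j+2) * ((2*n+2*m+2*j+1) * (2*n+2*m+2*j).factorial) := by
      rw [show 2*n+2*m+2*(j+1) = (2*n+2*m+2*j+1)+1 by omega, Nat.factorial_succ,
        Nat.factorial_succ]
    rw [h1, h2]
    have h3 : (m+j+1)^2 ≤ (2*n+2*m+2*j+2) * (2*n+2*m+2*j+1) := by nlinarith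
    calc (2*n+2*m).factorial * ((m+j+1) * (m+j).factorial)^2
        = (m+j+1)^2 * ((2*n+2*m).factorial * ((m+j).factorial)^2) := by ring
      _ ≤ ((2*n+2*m+2*j+2) * (2*n+2*m+2*j+1)) * ((2*n+2*m+2*j).factorial * (m.factorial)^2) :=
          Nat.mul_le_mul h3 ih
      _ = (2*n+2*m+2*j+2) * ((2*n+2*m+2*j+1) * (2*n+2*m+2*j).factorial) * (m.factorial)^2 := by
          ring

lemma key (n m : ℕ) (h : m ≤ n) :
    (2*n+2*m).factorial * (n.factorial)^2 ≤ (4*n).factorial * (m.factorial)^2 := by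
  have := key_aux n m (n - m)
  rw [show m + (n - m) = n by omega, show 2*n+2*m+2*(n-m) = 4*n by omega] at this
  exact this

theorem diag_sum_bound (n : ℕ) (lam mu : ℂ) :
    (∑ l ∈ Finset.range (n + 1), aCoeff l (n - l) * ‖lam‖ ^ l * ‖mu‖ ^ (n - l)) ≤
      ((4 * n).factorial : ℝ) / ((n.factorial : ℝ)) ^ 4 * (‖lam‖ + ‖mu‖) ^ n := by
  set x := ‖lam‖ with hx
  set y := ‖mu‖ with hy
  have hx0 : 0 ≤ x := norm_nonneg _
  have hy0 : 0 ≤ y := norm_nonneg _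
  have habound : ∀ l ∈ Finset.range (n+1),
      aCoeff l (n - l) * x ^ l * y ^ (n - l) ≤
      ((4*n).factorial : ℝ) / ((n.factorial : ℝ))^4 * (x ^ l * y ^ (n-l) * (n.choose l : ℝ)) := by
    intro l hl
    rw [Finset.mem_range] at hl
    have hln : l ≤ n := by omega
    set m := n - l with hm
    have hlm : l + m = n := by omega
    have hcoef : aCoeff l m ≤ ((4*n).factorial : ℝ) / ((n.factorial : ℝ))^4 * (n.choose l : ℝ) := by
      unfold aCoeff
      rw [hlm]
      have hchoose : (n.choose l : ℝ) = (n.factorial : ℝ) / ((l.factorial : ℝ) * (m.factorial : ℝ)) := by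
        rw [Nat.choose_eq_factorial_div_factorial hln]
        rw [Nat.cast_div]
        · rw [Nat.cast_mul, hm]
        · exact Nat.factorial_mul_factorial_dvd_factorial hln
        · positivity
      rw [hchoose]
      have h2 : 2*l + 4*m = 2*n + 2*m := by omega
      rw [h2, div_mul_div_comm, div_le_div_iff₀ (by positivity) (by positivity)]
      have hk := key n m (by omega)
      have hkR : ((2*n+2*m).factorial : ℝ) * ((n.factorial : ℝ))^2 ≤
          ((4*n).factorial : ℝ) * ((m.factorial : ℝ))^2 := by
        exact_mod_cast hk
      calc ((2*n+2*m).factorial : ℝ) * ((n.factorial : ℝ)^4 * ((l.factorial : ℝ) * (m.factorial : ℝ)))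
          = ((2*n+2*m).factorial : ℝ) * (n.factorial : ℝ)^2 *
              ((n.factorial : ℝ)^2 * (l.factorial : ℝ) * (m.factorial : ℝ)) := by ring
        _ ≤ ((4*n).factorial : ℝ) * ((m.factorial : ℝ))^2 *
              ((n.factorial : ℝ)^2 * (l.factorial : ℝ) * (m.factorial : ℝ)) :=
            mul_le_mul_of_nonneg_right hkR (by positivity)
        _ = ((4*n).factorial : ℝ) * (n.factorial : ℝ) *
              ((n.factorial : ℝ) * (l.factorial : ℝ) * (m.factorial : ℝ)^3) := by ring
    calc aCoeff l m * x ^ l * y ^ m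
        ≤ (((4*n).factorial : ℝ) / ((n.factorial : ℝ))^4 * (n.choose l : ℝ)) * x ^ l * y ^ m := by
          have h1 : (0:ℝ) ≤ x ^ l * y ^ m := by positivity
          have := mul_le_mul_of_nonneg_right hcoef h1
          calc aCoeff l m * x ^ l * y ^ m = aCoeff l m * (x ^ l * y ^ m) := by ring
            _ ≤ (((4*n).factorial : ℝ) / ((n.factorial : ℝ))^4 * (n.choose l : ℝ)) * (x^l * y^m) := this
            _ = _ := by ring
      _ = ((4*n).factorial : ℝ) / ((n.factorial : ℝ))^4 * (x ^ l * y ^ m * (n.choose l : ℝ)) := by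
          ring
  calc (∑ l ∈ Finset.range (n + 1), aCoeff l (n - l) * x ^ l * y ^ (n - l))
      ≤ ∑ l ∈ Finset.range (n + 1),
          ((4*n).factorial : ℝ) / ((n.factorial : ℝ))^4 * (x ^ l * y ^ (n-l) * (n.choose l : ℝ)) :=
        Finset.sum_le_sum habound
    _ = ((4*n).factorial : ℝ) / ((n.factorial : ℝ))^4 *
          ∑ l ∈ Finset.range (n + 1), x ^ l * y ^ (n-l) * (n.choose l : ℝ) := by
        rw [Finset.mul_sum]
    _ = ((4*n).factorial : ℝ) / ((n.factorial : ℝ))^4 * (x + y) ^ n := by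
        rw [add_pow]
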